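/- arXiv:1506.08942 — 2 statements merged into one kernel-verified Lean document; each statement's English description precedes it below -/
import Mathlib

section
/- Let H₁, H₂ be separable Hilbert spaces, K : H₁ → H₂ a bounded linear operator with adjoint K*, and set G = K*K, F = KK*. For fixed constants 0 < A ≤ B < ∞, the following are equivalent: (i) A⟨Gc, c⟩ ≤ ⟨G²c, c⟩ ≤ B⟨Gc, c⟩ for all c ∈ H₁; (ii) A‖φ‖² ≤ ⟨Fφ, φ⟩ ≤ B‖φ‖² for all φ in the closure of the range of K. -/
open ContinuousLinearMap in
/-- Lemma 2.4 (i ⇔ ii): for a bounded operator `K : H₁ → H₂` with `G = K*K`, `F = KK*`,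
and `0 < A ≤ B`, the quadratic-form inequalities `A⟨Gc,c⟩ ≤ ⟨G²c,c⟩ ≤ B⟨Gc,c⟩` on `H₁` are
equivalent to `A‖φ‖² ≤ ⟨Fφ,φ⟩ ≤ B‖φ‖²` on the closure of the range of `K`. -/
theorem stmt0 {H₁ H₂ : Type*} [NormedAddCommGroup H₁] [InnerProductSpace ℂ H₁] [CompleteSpace H₁]
    [NormedAddCommGroup H₂] [InnerProductSpace ℂ H₂] [CompleteSpace H₂]
    (K : H₁ →L[ℂ] H₂) (A B : ℝ) (hA : 0 < A) (hAB : A ≤ B)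
    (G : H₁ →L[ℂ] H₁) (hG : G = adjoint K ∘L K)
    (F : H₂ →L[ℂ] H₂) (hF : F = K ∘L adjoint K) :
    (∀ c : H₁,
      A * (inner ℂ (G c) c : ℂ).re ≤ (inner ℂ (G (G c)) c : ℂ).re ∧
      (inner ℂ (G (G c)) c : ℂ).re ≤ B * (inner ℂ (G c) c : ℂ).re) ↔
    (∀ φ ∈ closure (Set.range K),
      A * ‖φ‖ ^ 2 ≤ (inner ℂ (F φ) φ : ℂ).re ∧
      (inner ℂ (F φ) φ : ℂ).re ≤ B * ‖φ‖ ^ 2) := by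
  have key1 : ∀ c : H₁, (inner ℂ (G c) c : ℂ).re = ‖K c‖ ^ 2 := by
    intro c
    simp [hG, ContinuousLinearMap.adjoint_inner_left]
    rw [← Complex.ofReal_pow, Complex.ofReal_re]
  have key2 : ∀ c : H₁, (inner ℂ (G (G c)) c : ℂ) = inner ℂ (F (K c)) (K c) := by
    intro c
    simp [hG, hF, ContinuousLinearMap.adjoint_inner_left]
  constructor
  · intro h φ hφ
    have hcl : closure (Set.range K) ⊆
        {φ : H₂ | A * ‖φ‖ ^ 2 ≤ (inner ℂ (F φ) φ : ℂ).re ∧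
          (inner ℂ (F φ) φ : ℂ).re ≤ B * ‖φ‖ ^ 2} := by
      apply closure_minimal
      · rintro _ ⟨c, rfl⟩
        have := h c
        rw [key1, key2] at this
        exact this
      · have hc1 : Continuous fun φ : H₂ => (inner ℂ (F φ) φ : ℂ).re :=
          Complex.continuous_re.comp (F.continuous.inner continuous_id)
        have hc2 : Continuous fun φ : H₂ => ‖φ‖ ^ 2 := by continuity
        exact IsClosed.inter (isClosed_le (hc2.const_smul A) hc1)
          (isClosed_le hc1 (hc2.const_smul B))
    exact hcl hφ
  · intro h c
    have := h (K c) (subset_closure ⟨c, rfl⟩)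
    rw [key1, key2]
    exact this
end

section
/- Let K : H₁ → H₂ be a bounded operator between Hilbert spaces and G = K*K. Then the inequalities A⟨Gc, c⟩ ≤ ⟨G²c, c⟩ ≤ B⟨Gc, c⟩ for all c ∈ H₁ (with 0 < A ≤ B < ∞) hold if and only if the operator inequalities A·P ≤ G ≤ B·P hold, where P is the orthogonal projection onto the closure of the range of K*. -/
open ContinuousLinearMap in
/-- For `K : H₁ → H₂` bounded with `G = K*K` and `0 < A ≤ B`, the inequalities
`A⟨Gc,c⟩ ≤ ⟨G²c,c⟩ ≤ B⟨Gc,c⟩` for all `c` hold iff the operator inequalities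
`A·P ≤ G ≤ B·P` hold, `P` being the orthogonal projection onto `cl(Ran K*)`,
where `S ≤ T` means `⟨Sc,c⟩ ≤ ⟨Tc,c⟩` for all `c` (and `⟨Pc,c⟩ = ‖Pc‖²`). -/
theorem stmt1 {H₁ H₂ : Type*} [NormedAddCommGroup H₁] [InnerProductSpace ℂ H₁] [CompleteSpace H₁]
    [NormedAddCommGroup H₂] [InnerProductSpace ℂ H₂] [CompleteSpace H₂]
    (K : H₁ →L[ℂ] H₂) (A B : ℝ) (hA : 0 < A) (hAB : A ≤ B)
    (G : H₁ →L[ℂ] H₁) (hG : G = adjoint K ∘L K)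
    (P : H₁ → H₁)
    (hP : ∀ c : H₁, P c =
      (Submodule.orthogonalProjectionOnto (𝕜 := ℂ) (E := H₁) (LinearMap.range (adjoint K : H₂ →ₗ[ℂ] H₁)).topologicalClosure c : H₁)) :
    (∀ c : H₁,
      A * (inner ℂ (G c) c : ℂ).re ≤ (inner ℂ (G (G c)) c : ℂ).re ∧
      (inner ℂ (G (G c)) c : ℂ).re ≤ B * (inner ℂ (G c) c : ℂ).re) ↔
    (∀ c : H₁,
      A * (inner ℂ (P c) c : ℂ).re ≤ (inner ℂ (G c) c : ℂ).re ∧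
      (inner ℂ (G c) c : ℂ).re ≤ B * (inner ℂ (P c) c : ℂ).re) := by
  have hB : 0 < B := hA.trans_le hAB
  set M : Submodule ℂ H₁ := (LinearMap.range (adjoint K : H₂ →ₗ[ℂ] H₁)).topologicalClosure with hM
  have hadj : ∀ x y : H₁, (inner ℂ (G x) y : ℂ) = inner ℂ (K x) (K y) := by
    intro x y; rw [hG]; exact adjoint_inner_left K y (K x)
  have hKc : ∀ c : H₁, (inner ℂ (G c) c : ℂ).re = ‖K c‖ ^ 2 := by
    intro c; rw [hadj]; simpa using inner_self_eq_norm_sq (𝕜 := ℂ) (K c)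
  have hGG : ∀ c : H₁, (inner ℂ (G (G c)) c : ℂ).re = ‖G c‖ ^ 2 := by
    intro c
    have h1 : (inner ℂ (G (G c)) c : ℂ) = inner ℂ (G c) (G c) := by
      rw [hadj]
      nth_rewrite 3 [hG]
      exact (adjoint_inner_right K (G c) (K c)).symm
    rw [h1]; simpa using inner_self_eq_norm_sq (𝕜 := ℂ) (G c)
  have horthK : ∀ x : H₁, x ∈ Mᗮ → K x = 0 := by
    intro x hx
    have hmem : adjoint K (K x) ∈ M :=
      Submodule.le_topologicalClosure _ ⟨K x, rfl⟩
    have h0 : (inner ℂ (adjoint K (K x)) x : ℂ) = 0 :=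
      (Submodule.mem_orthogonal M x).mp hx _ hmem
    rw [adjoint_inner_left] at h0
    exact inner_self_eq_zero.mp h0
  have hsub : ∀ c : H₁, c - P c ∈ Mᗮ := by
    intro c; rw [hP]; exact M.sub_starProjection_mem_orthogonal c
  have hPM : ∀ c : H₁, P c ∈ M := by
    intro c; rw [hP]; exact SetLike.coe_mem _
  have hGM : ∀ c : H₁, G c ∈ M := by
    intro c; rw [hG]; exact Submodule.le_topologicalClosure _ ⟨K c, rfl⟩
  have hinner_PM : ∀ (u c : H₁), u ∈ M → (inner ℂ u c : ℂ) = inner ℂ u (P c) := by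
    intro u c hu
    have h0 : (inner ℂ u (c - P c) : ℂ) = 0 :=
      (Submodule.mem_orthogonal M (c - P c)).mp (hsub c) u hu
    rw [inner_sub_right] at h0
    exact sub_eq_zero.mp h0
  have hPc : ∀ c : H₁, (inner ℂ (P c) c : ℂ).re = ‖P c‖ ^ 2 := by
    intro c
    rw [hinner_PM (P c) c (hPM c)]
    simpa using inner_self_eq_norm_sq (𝕜 := ℂ) (P c)
  have hKP : ∀ c : H₁, K (P c) = K c := by
    intro c
    have h0 := horthK _ (hsub c)
    rw [map_sub] at h0
    exact (sub_eq_zero.mp h0).symm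
  have hPle : ∀ c : H₁, ‖P c‖ ≤ ‖c‖ := by
    intro c
    have h1 : ‖P c‖ ^ 2 ≤ ‖P c‖ * ‖c‖ := by
      rw [← hPc c]
      calc (inner ℂ (P c) c : ℂ).re ≤ ‖(inner ℂ (P c) c : ℂ)‖ := Complex.re_le_norm _
        _ = ‖(inner ℂ (P c) c : ℂ)‖ := rfl
        _ ≤ ‖P c‖ * ‖c‖ := norm_inner_le_norm _ _
    rcases (norm_nonneg (P c)).eq_or_lt with h0 | h0
    · rw [← h0]; exact norm_nonneg c
    · nlinarith [h1, h0]
  -- the key Cauchy–Schwarz style estimate: ‖Kc‖² = Re⟪Gc, Pc⟫ ≤ ‖Gc‖‖Pc‖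
  have hCS : ∀ c : H₁, ‖K c‖ ^ 2 ≤ ‖G c‖ * ‖P c‖ := by
    intro c
    rw [← hKc c, hinner_PM (G c) c (hGM c)]
    calc (inner ℂ (G c) (P c) : ℂ).re ≤ ‖(inner ℂ (G c) (P c) : ℂ)‖ := Complex.re_le_norm _
      _ = ‖(inner ℂ (G c) (P c) : ℂ)‖ := rfl
      _ ≤ ‖G c‖ * ‖P c‖ := norm_inner_le_norm _ _
  constructor
  · intro h c
    have h2 := (h c).2
    rw [hGG, hKc] at h2
    constructor
    · -- lower bound: A‖Pc‖² ≤ ‖Kc‖², via density of Ran G in M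
      rw [hPc, hKc]
      have hclosure : (LinearMap.range (G : H₁ →ₗ[ℂ] H₁)).topologicalClosure = M := by
        have horth : (LinearMap.range (G : H₁ →ₗ[ℂ] H₁))ᗮ = (LinearMap.range (adjoint K : H₂ →ₗ[ℂ] H₁))ᗮ := by
          ext x
          simp only [Submodule.mem_orthogonal]
          constructor
          · intro hx
            have hKx : K x = 0 := by
              have h0 : (inner ℂ (G x) x : ℂ) = 0 := hx _ ⟨x, rfl⟩
              rw [hadj] at h0
              exact inner_self_eq_zero.mp h0
            rintro u ⟨z, rfl⟩
            rw [ContinuousLinearMap.coe_coe, adjoint_inner_left, hKx, inner_zero_right]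
          · intro hx
            have hKx : K x = 0 := by
              have h0 : (inner ℂ (adjoint K (K x)) x : ℂ) = 0 := hx _ ⟨K x, rfl⟩
              rw [adjoint_inner_left] at h0
              exact inner_self_eq_zero.mp h0
            rintro u ⟨z, rfl⟩
            rw [ContinuousLinearMap.coe_coe, hadj, hKx, inner_zero_right]
        calc (LinearMap.range (G : H₁ →ₗ[ℂ] H₁)).topologicalClosure
            = (LinearMap.range (G : H₁ →ₗ[ℂ] H₁))ᗮᗮ :=
              (Submodule.orthogonal_orthogonal_eq_closure _).symm
          _ = (LinearMap.range (adjoint K : H₂ →ₗ[ℂ] H₁))ᗮᗮ := by rw [horth]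
          _ = M := Submodule.orthogonal_orthogonal_eq_closure _
      have hPmem : P c ∈ closure ((LinearMap.range (G : H₁ →ₗ[ℂ] H₁) : Submodule ℂ H₁) : Set H₁) := by
        rw [← Submodule.topologicalClosure_coe, hclosure]
        exact hPM c
      obtain ⟨u, hu, hulim⟩ := mem_closure_iff_seq_limit.mp hPmem
      choose y hy using fun n => LinearMap.mem_range.mp (hu n)
      have key : ∀ n, A * ((inner ℂ (G (y n)) c : ℂ).re) ^ 2 ≤ ‖G (y n)‖ ^ 2 * ‖K c‖ ^ 2 := by
        intro n
        have h1 : A * ‖K (y n)‖ ^ 2 ≤ ‖G (y n)‖ ^ 2 := by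
          have := (h (y n)).1
          rwa [hKc, hGG] at this
        have h3 : ‖(inner ℂ (G (y n)) c : ℂ)‖ ≤ ‖K (y n)‖ * ‖K c‖ := by
          rw [hadj]; exact norm_inner_le_norm _ _
        have h4 : |(inner ℂ (G (y n)) c : ℂ).re| ≤ ‖(inner ℂ (G (y n)) c : ℂ)‖ :=
          Complex.abs_re_le_norm _
        have h2 : ((inner ℂ (G (y n)) c : ℂ).re) ^ 2 ≤ (‖K (y n)‖ * ‖K c‖) ^ 2 := by
          have h5 : |(inner ℂ (G (y n)) c : ℂ).re| ≤ ‖K (y n)‖ * ‖K c‖ := h4.trans h3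
          nlinarith [abs_nonneg ((inner ℂ (G (y n)) c : ℂ).re),
            sq_abs ((inner ℂ (G (y n)) c : ℂ).re)]
        calc A * ((inner ℂ (G (y n)) c : ℂ).re) ^ 2
            ≤ A * (‖K (y n)‖ * ‖K c‖) ^ 2 := mul_le_mul_of_nonneg_left h2 hA.le
          _ = (A * ‖K (y n)‖ ^ 2) * ‖K c‖ ^ 2 := by ring
          _ ≤ ‖G (y n)‖ ^ 2 * ‖K c‖ ^ 2 := mul_le_mul_of_nonneg_right h1 (sq_nonneg _)
      have hglim : Filter.Tendsto (fun n => G (y n)) Filter.atTop (nhds (P c)) :=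
        hulim.congr fun n => (hy n).symm
      have hcont : Continuous fun x : H₁ => (inner ℂ x c : ℂ).re :=
        Complex.continuous_re.comp (Continuous.inner continuous_id continuous_const)
      have t0 : Filter.Tendsto (fun n => (inner ℂ (G (y n)) c : ℂ).re) Filter.atTop
          (nhds ((inner ℂ (P c) c : ℂ).re)) :=
        (hcont.tendsto (P c)).comp hglim
      have t1 : Filter.Tendsto (fun n => A * ((inner ℂ (G (y n)) c : ℂ).re) ^ 2) Filter.atTop
          (nhds (A * ((inner ℂ (P c) c : ℂ).re) ^ 2)) :=
        (t0.pow 2).const_mul A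
      have t2 : Filter.Tendsto (fun n => ‖G (y n)‖ ^ 2 * ‖K c‖ ^ 2) Filter.atTop
          (nhds (‖P c‖ ^ 2 * ‖K c‖ ^ 2)) :=
        (hglim.norm.pow 2).mul_const _
      have hlim : A * ((inner ℂ (P c) c : ℂ).re) ^ 2 ≤ ‖P c‖ ^ 2 * ‖K c‖ ^ 2 :=
        le_of_tendsto_of_tendsto' t1 t2 key
      rw [hPc] at hlim
      rcases (norm_nonneg (P c)).eq_or_lt with h0 | h0
      · rw [← h0]
        nlinarith [sq_nonneg (‖K c‖)]
      · nlinarith [hlim, pow_pos h0 2, sq_nonneg (‖K c‖)]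
    · -- upper bound: ‖Kc‖² ≤ B‖Pc‖²
      rw [hKc, hPc]
      have h3 : (‖K c‖ ^ 2) ^ 2 ≤ ‖G c‖ ^ 2 * ‖P c‖ ^ 2 := by
        nlinarith [hCS c, sq_nonneg (‖K c‖), norm_nonneg (G c), norm_nonneg (P c)]
      rcases (norm_nonneg (K c)).eq_or_lt with h0 | h0
      · rw [← h0]
        nlinarith [sq_nonneg (‖P c‖)]
      · nlinarith [h2, h3, pow_pos h0 2, sq_nonneg (‖P c‖)]
  · intro h c
    have h1 := (h c).1
    have h2 := (h c).2
    rw [hPc, hKc] at h1 h2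
    constructor
    · -- A‖Kc‖² ≤ ‖Gc‖²
      rw [hGG, hKc]
      have h3 : (‖K c‖ ^ 2) ^ 2 ≤ ‖G c‖ ^ 2 * ‖P c‖ ^ 2 := by
        nlinarith [hCS c, sq_nonneg (‖K c‖), norm_nonneg (G c), norm_nonneg (P c)]
      rcases (norm_nonneg (K c)).eq_or_lt with h0 | h0
      · rw [← h0]
        nlinarith [sq_nonneg (‖G c‖)]
      · nlinarith [h1, h3, pow_pos h0 2, sq_nonneg (‖G c‖)]
    · -- ‖Gc‖² ≤ B‖Kc‖²
      rw [hGG, hKc]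
      have h5 : ‖G c‖ ^ 2 ≤ ‖K (G c)‖ * ‖K c‖ := by
        have heq : (inner ℂ (G c) (G c) : ℂ) = inner ℂ (K (G c)) (K c) := by
          nth_rewrite 2 [hG]
          exact adjoint_inner_right K (G c) (K c)
        have h6 : (inner ℂ (G c) (G c) : ℂ).re = ‖G c‖ ^ 2 := by
          simpa using inner_self_eq_norm_sq (𝕜 := ℂ) (G c)
        rw [← h6, heq]
        calc (inner ℂ (K (G c)) (K c) : ℂ).re
            ≤ ‖(inner ℂ (K (G c)) (K c) : ℂ)‖ := Complex.re_le_norm _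
          _ = ‖(inner ℂ (K (G c)) (K c) : ℂ)‖ := rfl
          _ ≤ ‖K (G c)‖ * ‖K c‖ := norm_inner_le_norm _ _
      have h6 : ‖K (G c)‖ ^ 2 ≤ B * ‖G c‖ ^ 2 := by
        have h7 := (h (G c)).2
        rw [hPc, hKc] at h7
        have h8 : ‖P (G c)‖ ^ 2 ≤ ‖G c‖ ^ 2 :=
          pow_le_pow_left₀ (norm_nonneg _) (hPle (G c)) 2
        nlinarith [h7, h8]
      rcases (norm_nonneg (G c)).eq_or_lt with h0 | h0
      · rw [← h0]
        nlinarith [sq_nonneg (‖K c‖)]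
      · nlinarith [h5, h6, pow_pos h0 2, sq_nonneg (‖K c‖),
          norm_nonneg (K (G c)), norm_nonneg (K c)]
end
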